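/- Let r = n, b_1,…,b_n distinct mod π, ν = Σ a_j − Σ b_j, and z avoiding poles. Then ∏_{j=1}^{n} sin(a_j−z) / ∏_{j=1}^{n} sin(b_j−z) = e^{−iν} + Σ_{j=1}^{n} [∏_{k=1}^{n} sin(a_k−b_j)] e^{i(b_j−z)} / [∏_{m≠j} sin(b_m−b_j) · sin(b_j−z)]. -/

import Mathlib

open Finset Polynomial Complex

lemma lagrange_identity {n : ℕ} (α β : Fin n → ℂ) (hβ : Function.Injective β) (x : ℂ) :
    ∏ j, (x - α j) = (∏ j, (x - β j)) +
      ∑ j, ((∏ k, (β j - α k)) / (∏ m ∈ univ.erase j, (β j - β m))) *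
        ∏ m ∈ univ.erase j, (x - β m) := by
  set c : Fin n → ℂ := fun j => (∏ k, (β j - α k)) / (∏ m ∈ univ.erase j, (β j - β m)) with hc
  set P : ℂ[X] := ∏ j, (X - C (α j)) with hP
  set Q : ℂ[X] := ∏ j, (X - C (β j)) with hQ
  set R : ℂ[X] := ∑ j : Fin n, C (c j) * ∏ m ∈ univ.erase j, (X - C (β m)) with hR
  have hPm : P.Monic := monic_prod_of_monic _ _ (fun j _ => monic_X_sub_C _)
  have hQm : Q.Monic := monic_prod_of_monic _ _ (fun j _ => monic_X_sub_C _)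
  have hPd : P.degree = n := by
    rw [hP, degree_prod]; simp [degree_X_sub_C]
  have hQd : Q.degree = n := by
    rw [hQ, degree_prod]; simp [degree_X_sub_C]
  have hPQ : (P - Q).degree < (n : WithBot ℕ) := by
    rcases eq_or_ne P Q with h | h
    · rw [h, sub_self, degree_zero]
      exact WithBot.bot_lt_coe _
    · have := degree_sub_lt (hPd.trans hQd.symm) hPm.ne_zero (by rw [hPm.leadingCoeff, hQm.leadingCoeff])
      rwa [hPd] at this
  have hRd : R.degree < (n : WithBot ℕ) := by
    refine lt_of_le_of_lt (degree_sum_le _ _) ?_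
    rw [Finset.sup_lt_iff (by exact WithBot.bot_lt_coe _)]
    intro j _
    refine lt_of_le_of_lt (degree_mul_le _ _) ?_
    have h1 : (C (c j)).degree ≤ 0 := degree_C_le
    have h2 : (∏ m ∈ univ.erase j, (X - C (β m))).degree = ((n - 1 : ℕ) : WithBot ℕ) := by
      rw [degree_prod]; simp [degree_X_sub_C, Finset.card_erase_of_mem]
    calc (C (c j)).degree + (∏ m ∈ univ.erase j, (X - C (β m))).degree
        ≤ 0 + ((n - 1 : ℕ) : WithBot ℕ) := add_le_add h1 h2.le
      _ < n := by
          rw [zero_add, Nat.cast_lt]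
          have : 0 < n := j.pos
          omega
  have key : P = Q + R := by
    refine eq_of_degree_sub_lt_of_eval_index_eq (v := β) univ (hβ.injOn) ?_ ?_
    · rw [card_univ, Fintype.card_fin]
      have : P - (Q + R) = (P - Q) - R := by ring
      rw [this]
      exact lt_of_le_of_lt (degree_sub_le _ _) (max_lt hPQ hRd)
    · intro i _
      have hQe : Q.eval (β i) = 0 := by
        rw [hQ, eval_prod]
        exact Finset.prod_eq_zero (mem_univ i) (by simp)
      have hRe : R.eval (β i) = ∏ k, (β i - α k) := by
        rw [hR, eval_finset_sum]
        rw [Finset.sum_eq_single i]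
        · have hden : (∏ m ∈ univ.erase i, (β i - β m)) ≠ 0 := by
            refine Finset.prod_ne_zero_iff.mpr fun m hm => sub_ne_zero.mpr ?_
            exact fun h => (Finset.mem_erase.mp hm).1 (hβ h).symm
          simp only [eval_mul, eval_C, eval_prod, eval_sub, eval_X]
          rw [hc]
          exact div_mul_cancel₀ _ hden
        · intro j _ hj
          simp only [eval_mul, eval_C, eval_prod, eval_sub, eval_X]
          have : ∏ m ∈ univ.erase j, (β i - β m) = 0 :=
            Finset.prod_eq_zero (Finset.mem_erase.mpr ⟨Ne.symm hj, mem_univ i⟩) (by simp)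
          rw [this, mul_zero]
        · simp
      rw [eval_add, hQe, hRe, zero_add, hP, eval_prod]
      simp
  have h := congrArg (eval x) key
  simp only [hP, hQ, hR, eval_prod, eval_finset_sum, eval_add, eval_mul, eval_sub,
    eval_X, eval_C] at h
  exact h

lemma prod_neg' {ι : Type*} (s : Finset ι) (f : ι → ℂ) :
    ∏ j ∈ s, -(f j) = (-1)^s.card * ∏ j ∈ s, f j := by
  rw [Finset.prod_congr rfl (fun j _ => (neg_eq_neg_one_mul (f j))),
    Finset.prod_mul_distrib, Finset.prod_const]

lemma flip_prod {ι : Type*} (s : Finset ι) (g h : ι → ℂ) :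
    ∏ j ∈ s, (g j - h j) = (-1)^s.card * ∏ j ∈ s, (h j - g j) := by
  rw [← prod_neg']
  exact Finset.prod_congr rfl (fun j _ => by ring)

lemma partial_fraction {n : ℕ} (α β : Fin n → ℂ) (hβ : Function.Injective β)
    (x : ℂ) (hx : ∀ j, β j - x ≠ 0) :
    (∏ j, (α j - x)) / (∏ j, (β j - x)) =
      1 + ∑ j, (∏ k, (α k - β j)) /
        ((∏ m ∈ univ.erase j, (β m - β j)) * (β j - x)) := by
  have hxβ : ∀ j, x - β j ≠ 0 := fun j =>
    sub_ne_zero.mpr (Ne.symm (sub_ne_zero.mp (hx j)))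
  have hB : (∏ j, (x - β j)) ≠ 0 := prod_ne_zero_iff.mpr (fun j _ => hxβ j)
  have hneg : ((-1 : ℂ))^n ≠ 0 := pow_ne_zero _ (neg_ne_zero.mpr one_ne_zero)
  have hL : (∏ j, (α j - x)) / (∏ j, (β j - x)) =
      (∏ j, (x - α j)) / (∏ j, (x - β j)) := by
    rw [flip_prod univ α (fun _ => x), flip_prod univ β (fun _ => x)]
    simp only [card_univ, Fintype.card_fin]
    exact mul_div_mul_left _ _ hneg
  rw [hL, lagrange_identity α β hβ x, add_div, div_self hB, Finset.sum_div]
  congr 1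
  refine Finset.sum_congr rfl (fun j _ => ?_)
  have hn1 : ((-1 : ℂ))^(n-1) * (-1) = (-1)^n := by
    rw [← pow_succ]
    congr 1
    have := j.pos
    omega
  have hE : (∏ m ∈ univ.erase j, (x - β m)) ≠ 0 :=
    prod_ne_zero_iff.mpr (fun m _ => hxβ m)
  have hBsplit : (∏ m, (x - β m)) = (x - β j) * ∏ m ∈ univ.erase j, (x - β m) :=
    (Finset.mul_prod_erase univ _ (mem_univ j)).symm
  have hnum : (∏ k, (α k - β j)) = (-1)^n * ∏ k, (β j - α k) := by
    rw [flip_prod univ α (fun _ => β j)]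
    simp [card_univ]
  have hden : (∏ m ∈ univ.erase j, (β m - β j)) * (β j - x)
      = (-1)^n * ((∏ m ∈ univ.erase j, (β j - β m)) * (x - β j)) := by
    rw [flip_prod (univ.erase j) β (fun _ => β j), card_erase_of_mem (mem_univ j),
      card_univ, Fintype.card_fin, show (β j - x) = (-1) * (x - β j) by ring]
    rw [← hn1]; ring
  rw [hnum, hden, mul_div_mul_left _ _ hneg, hBsplit]
  rw [div_mul_eq_mul_div, div_div]
  rw [show (∏ m ∈ univ.erase j, (β j - β m)) * ((x - β j) * ∏ m ∈ univ.erase j, (x - β m))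
    = ((∏ m ∈ univ.erase j, (β j - β m)) * (x - β j)) * ∏ m ∈ univ.erase j, (x - β m) by ring]
  exact mul_div_mul_right _ _ hE

lemma sin_factor (u z : ℂ) :
    Complex.sin (u - z) = (Complex.exp (2*I*u) - Complex.exp (2*I*z)) *
      (Complex.exp (-(I*u)) * Complex.exp (-(I*z))) / (2*I) := by
  have e1 : cexp (2*I*u) * (cexp (-(I*u)) * cexp (-(I*z))) = cexp ((u-z)*I) := by
    rw [← Complex.exp_add, ← Complex.exp_add]; ring_nf
  have e2 : cexp (2*I*z) * (cexp (-(I*u)) * cexp (-(I*z))) = cexp (-(u-z)*I) := by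
    rw [← Complex.exp_add, ← Complex.exp_add]; ring_nf
  rw [Complex.sin, div_eq_div_iff two_ne_zero (mul_ne_zero two_ne_zero I_ne_zero)]
  linear_combination 2*(cexp (-(u-z)*I) - cexp ((u-z)*I)) * Complex.I_sq - 2*e1 + 2*e2

lemma prod_sin {ι : Type*} (s : Finset ι) (u : ι → ℂ) (w : ℂ) :
    ∏ j ∈ s, Complex.sin (u j - w)
      = (∏ j ∈ s, (cexp (2*I*u j) - cexp (2*I*w))) *
        ((∏ j ∈ s, cexp (-(I*u j))) * (cexp (-(I*w)))^s.card) / (2*I)^s.card := by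
  rw [Finset.prod_congr rfl (fun j _ => sin_factor (u j) w), Finset.prod_div_distrib]
  simp only [Finset.prod_mul_distrib, Finset.prod_const]
  ring

lemma main_c {n : ℕ} (a b : Fin n → ℂ)
    (hbinj : Function.Injective (fun j => cexp (2*I*b j)))
    (z : ℂ) (hz : ∀ j, cexp (2*I*b j) - cexp (2*I*z) ≠ 0) :
    (∏ j, Complex.sin (a j - z)) / (∏ j, Complex.sin (b j - z))
      = cexp (-(I*((∑ j, a j) - ∑ j, b j))) +
        ∑ j, ((∏ k, Complex.sin (a k - b j)) * cexp (I*(b j - z))) /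
          ((∏ l ∈ univ.erase j, Complex.sin (b l - b j)) * Complex.sin (b j - z)) := by
  classical
  have hsumneg : ∀ (f : Fin n → ℂ), ∑ j, -(I * f j) = -(I * ∑ j, f j) := by
    intro f; rw [Finset.mul_sum]; rw [Finset.sum_neg_distrib]
  have hSA : cexp (-(I*((∑ j, a j) - ∑ j, b j))) * (∏ j, cexp (-(I*b j)))
      = ∏ j, cexp (-(I*a j)) := by
    rw [← Complex.exp_sum, ← Complex.exp_sum, ← Complex.exp_add, hsumneg, hsumneg]
    congr 1; ring
  have hexp : ∀ w : ℂ, cexp w ≠ 0 := Complex.exp_ne_zero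
  have h2I : (2*I : ℂ) ≠ 0 := mul_ne_zero two_ne_zero I_ne_zero
  have hLHS : (∏ j, Complex.sin (a j - z)) / (∏ j, Complex.sin (b j - z))
      = cexp (-(I*((∑ j, a j) - ∑ j, b j))) *
        ((∏ j, (cexp (2*I*a j) - cexp (2*I*z))) / (∏ j, (cexp (2*I*b j) - cexp (2*I*z)))) := by
    rw [prod_sin univ a z, prod_sin univ b z]
    simp only [card_univ, Fintype.card_fin]
    have hPB : (∏ j, (cexp (2*I*b j) - cexp (2*I*z))) ≠ 0 :=
      prod_ne_zero_iff.mpr (fun j _ => hz j)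
    have hEb : (∏ j, cexp (-(I*b j))) ≠ 0 := prod_ne_zero_iff.mpr (fun j _ => hexp _)
    rw [← hSA]
    field_simp
  rw [hLHS, partial_fraction (fun j => cexp (2*I*a j)) (fun j => cexp (2*I*b j)) hbinj
    (cexp (2*I*z)) hz, mul_add, mul_one, Finset.mul_sum]
  congr 1
  refine Finset.sum_congr rfl (fun j _ => ?_)
  rw [prod_sin univ a (b j), prod_sin (univ.erase j) b (b j), sin_factor (b j) z]
  simp only [card_univ, Fintype.card_fin, card_erase_of_mem (mem_univ j)]
  rw [show I*(b j - z) = -(-(I*(b j))) + -(I*z) by ring, Complex.exp_add,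
    Complex.exp_neg (-(I*(b j)))]
  have hpow2 : ((2*I:ℂ))^n = (2*I)^(n-1) * (2*I) := by
    rw [← pow_succ]; congr 1; have := j.pos; omega
  have hpowE : cexp (-(I*(b j)))^n = cexp (-(I*(b j)))^(n-1) * cexp (-(I*(b j))) := by
    rw [← pow_succ]; congr 1; have := j.pos; omega
  have hSB' : (∏ m ∈ univ.erase j, cexp (-(I*b m))) * cexp (-(I*(b j)))
      = ∏ m, cexp (-(I*b m)) := Finset.prod_erase_mul univ _ (mem_univ j)
  rw [hpow2, hpowE, ← hSA, ← hSB']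
  have hP4 : (∏ m ∈ univ.erase j, (cexp (2*I*b m) - cexp (2*I*(b j)))) ≠ 0 := by
    refine prod_ne_zero_iff.mpr (fun m hm => sub_ne_zero.mpr ?_)
    exact fun h => (Finset.mem_erase.mp hm).1 (hbinj h)
  have hBx : cexp (2*I*(b j)) - cexp (2*I*z) ≠ 0 := hz j
  have hSB'ne : (∏ m ∈ univ.erase j, cexp (-(I*b m))) ≠ 0 :=
    prod_ne_zero_iff.mpr (fun m _ => hexp _)
  have h2In : ((2*I:ℂ))^(n-1) ≠ 0 := pow_ne_zero _ h2I
  have hEbn : cexp (-(I*(b j)))^(n-1) ≠ 0 := pow_ne_zero _ (hexp _)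
  have hEne : cexp (-(I*(b j))) ≠ 0 := hexp _
  have hWne : cexp (-(I*z)) ≠ 0 := hexp _
  revert hP4 hBx hSB'ne h2In hEbn hEne hWne
  generalize (∏ k, (cexp (2*I*a k) - cexp (2*I*b j))) = P3
  generalize (∏ m ∈ univ.erase j, (cexp (2*I*b m) - cexp (2*I*b j))) = P4
  generalize (∏ m ∈ univ.erase j, cexp (-(I*b m))) = S
  generalize (cexp (2*I*b j) - cexp (2*I*z)) = D
  generalize cexp (-(I*((∑ j, a j) - ∑ j, b j))) = V
  generalize cexp (-(I*b j)) = E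
  generalize cexp (-(I*z)) = W
  generalize E^(n-1) = En
  generalize ((2*I : ℂ))^(n-1) = C2
  intro hP4 hBx hSB'ne h2In hEbn hEne hWne
  field_simp

theorem kappa_zero_expansion (n : ℕ) (a b : Fin n → ℝ)
    (hb : ∀ j k, j ≠ k → Real.sin (b j - b k) ≠ 0)
    (ν : ℝ) (hν : ν = ∑ j, a j - ∑ j, b j)
    (z : ℂ) (hz : ∀ j, Complex.sin ((b j : ℂ) - z) ≠ 0) :
    (∏ j, Complex.sin ((a j : ℂ) - z)) / (∏ j, Complex.sin ((b j : ℂ) - z))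
      = Complex.exp (-(Complex.I * ν)) +
        ∑ j, ((∏ k, Complex.sin ((a k : ℂ) - (b j : ℂ))) *
            Complex.exp (Complex.I * ((b j : ℂ) - z))) /
          ((∏ l ∈ univ.erase j, Complex.sin ((b l : ℂ) - (b j : ℂ))) *
            Complex.sin ((b j : ℂ) - z)) := by
  have hbinj : Function.Injective (fun j : Fin n => cexp (2*I*((b j : ℂ)))) := by
    intro j k h
    by_contra hjk
    apply hb j k hjk
    dsimp only at h
    have h0 : Complex.sin ((b j:ℂ) - (b k:ℂ)) = 0 := by
      rw [sin_factor, h, sub_self, zero_mul, zero_div]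
    have h1 : ((Real.sin (b j - b k) : ℝ) : ℂ) = 0 := by
      rw [Complex.ofReal_sin]; push_cast; exact h0
    exact_mod_cast h1
  have hz' : ∀ j, cexp (2*I*((b j : ℂ))) - cexp (2*I*z) ≠ 0 := by
    intro j h
    apply hz j
    rw [sin_factor, h, zero_mul, zero_div]
  have hcast : ((ν : ℂ)) = (∑ j, ((a j : ℂ))) - ∑ j, ((b j : ℂ)) := by
    rw [hν]; push_cast; ring
  have h := main_c (fun j => ((a j : ℂ))) (fun j => ((b j : ℂ))) hbinj z hz'
  rw [h, ← hcast]
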